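/- Let G be a digraph and n ≥ 1. If G is congruence n-permutable (has ternary polymorphisms p₀,...,pₙ with p₀(x,y,z) = x, pᵢ(x,x,y) = p_{i+1}(x,y,y) for all i < n, and pₙ(x,y,z) = z), then the two-sided extension G^⊥⊤ is congruence (n+2)-permutable. -/
import Mathlib


/-- A digraph is congruence `n`-permutable if it has a chain of ternary polymorphisms
witnessing `n`-permutability. -/
def IsNPermutable {V : Type*} (E : V → V → Prop) (n : ℕ) : Prop :=
  ∃ p : Fin (n + 1) → V → V → V → V,
    (∀ i, ∀ a₁ a₂ a₃ b₁ b₂ b₃, E a₁ b₁ → E a₂ b₂ → E a₃ b₃ →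
      E (p i a₁ a₂ a₃) (p i b₁ b₂ b₃)) ∧
    (∀ x y z, p 0 x y z = x) ∧
    (∀ i : Fin n, ∀ x y, p i.castSucc x x y = p i.succ x y y) ∧
    (∀ x y z, p (Fin.last n) x y z = z)

namespace PermAux

variable {V : Type*}

/-- `A x y z` : the "second" polymorphism of the extension.
Semantics: if `z = ⊥ ∧ y ≠ ⊥ ∧ x ≠ ⊤` then `⊥`, else if
`z = ⊤ ∧ y ≠ ⊤ ∧ x ≠ ⊥` then `⊤`, else `x`. -/
def A : V ⊕ Bool → V ⊕ Bool → V ⊕ Bool → V ⊕ Bool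
  | Sum.inr true, _, Sum.inr false => Sum.inr true
  | x, Sum.inr false, Sum.inr false => x
  | _, _, Sum.inr false => Sum.inr false
  | Sum.inr false, _, Sum.inr true => Sum.inr false
  | x, Sum.inr true, Sum.inr true => x
  | _, _, Sum.inr true => Sum.inr true
  | x, _, Sum.inl _ => x

/-- `B x y z` : the "second to last" polymorphism.
Semantics: if `x = ⊤ ∧ y ≠ ⊤` then `⊤`, else if `x = ⊥ ∧ y ≠ ⊥` then `⊥`, else `z`. -/
def B : V ⊕ Bool → V ⊕ Bool → V ⊕ Bool → V ⊕ Bool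
  | Sum.inr true, Sum.inr true, z => z
  | Sum.inr true, _, _ => Sum.inr true
  | Sum.inr false, Sum.inr false, z => z
  | Sum.inr false, _, _ => Sum.inr false
  | Sum.inl _, _, z => z

/-- value of the middle polymorphisms on mixed triples:
`⊥` if `x = ⊥`, else `⊤` if some argument is `⊤`, else `⊥`. -/
def M : V ⊕ Bool → V ⊕ Bool → V ⊕ Bool → V ⊕ Bool
  | Sum.inr false, _, _ => Sum.inr false
  | Sum.inr true, _, _ => Sum.inr true
  | _, Sum.inr true, _ => Sum.inr true
  | _, _, Sum.inr true => Sum.inr true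
  | _, _, _ => Sum.inr false

/-- middle polymorphism : `pk` on pure triples, `M` on mixed ones. -/
def mid (pk : V → V → V → V) : V ⊕ Bool → V ⊕ Bool → V ⊕ Bool → V ⊕ Bool
  | Sum.inl u, Sum.inl v, Sum.inl w => Sum.inl (pk u v w)
  | x, y, z => M x y z

/-- the full chain, indexed by a natural number. -/
def Q (n : ℕ) (p : ℕ → V → V → V → V) (k : ℕ) :
    V ⊕ Bool → V ⊕ Bool → V ⊕ Bool → V ⊕ Bool :=
  if k = 0 then fun x _ _ => x
  else if k = n + 2 then fun _ _ z => z
  else if k = 1 then A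
  else if k = n + 1 then B
  else mid (p (k - 1))

lemma A_xyy (x y : V ⊕ Bool) : A x y y = x := by
  rcases x with u | (_|_) <;> rcases y with v | (_|_) <;> rfl

lemma B_xxy (x y : V ⊕ Bool) : B x x y = y := by
  rcases x with u | (_|_) <;> rcases y with v | (_|_) <;> rfl

lemma A_chain_mid (pk : V → V → V → V) (hpk : ∀ u v, pk u v v = u) (x y : V ⊕ Bool) :
    A x x y = mid pk x y y := by
  rcases x with u | (_|_) <;> rcases y with v | (_|_) <;>
    simp [A, mid, M, hpk]

lemma mid_chain (pk pk' : V → V → V → V) (hk : ∀ u v, pk u u v = pk' u v v)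
    (x y : V ⊕ Bool) : mid pk x x y = mid pk' x y y := by
  rcases x with u | (_|_) <;> rcases y with v | (_|_) <;>
    simp [mid, M, hk]

lemma mid_chain_B (pk : V → V → V → V) (hpk : ∀ u v, pk u u v = v) (x y : V ⊕ Bool) :
    mid pk x x y = B x y y := by
  rcases x with u | (_|_) <;> rcases y with v | (_|_) <;>
    simp [mid, M, B, hpk]

lemma A_chain_B (hsub : ∀ u v : V, u = v) (x y : V ⊕ Bool) :
    A x x y = B x y y := by
  rcases x with u | (_|_) <;> rcases y with v | (_|_) <;>
    simp [A, B]
  exact hsub u v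

lemma A_spec_a (a1 a2 a3 : V ⊕ Bool) (t1 : a1 ≠ Sum.inr true) (t3 : a3 ≠ Sum.inr true) :
    A a1 a2 a3 = Sum.inr false ∨ A a1 a2 a3 = a1 := by
  rcases a1 with u1 | (_|_) <;> rcases a2 with u2 | (_|_) <;>
    rcases a3 with u3 | (_|_) <;> simp_all [A]

lemma A_spec_b (b1 b2 b3 : V ⊕ Bool) (s1 : b1 ≠ Sum.inr false) (s3 : b3 ≠ Sum.inr false) :
    A b1 b2 b3 = Sum.inr true ∨ A b1 b2 b3 = b1 := by
  rcases b1 with u1 | (_|_) <;> rcases b2 with u2 | (_|_) <;>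
    rcases b3 with u3 | (_|_) <;> simp_all [A]

lemma B_spec_a (a1 a2 a3 : V ⊕ Bool) (t1 : a1 ≠ Sum.inr true) :
    B a1 a2 a3 = Sum.inr false ∨ B a1 a2 a3 = a3 := by
  rcases a1 with u1 | (_|_) <;> rcases a2 with u2 | (_|_) <;>
    rcases a3 with u3 | (_|_) <;> simp_all [B]

lemma B_spec_b (b1 b2 b3 : V ⊕ Bool) (s1 : b1 ≠ Sum.inr false) :
    B b1 b2 b3 = Sum.inr true ∨ B b1 b2 b3 = b3 := by
  rcases b1 with u1 | (_|_) <;> rcases b2 with u2 | (_|_) <;>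
    rcases b3 with u3 | (_|_) <;> simp_all [B]

lemma mid_spec_a (pk : V → V → V → V) (a1 a2 a3 : V ⊕ Bool)
    (t1 : a1 ≠ Sum.inr true) (t2 : a2 ≠ Sum.inr true) (t3 : a3 ≠ Sum.inr true) :
    (∃ u1 u2 u3, a1 = Sum.inl u1 ∧ a2 = Sum.inl u2 ∧ a3 = Sum.inl u3 ∧
      mid pk a1 a2 a3 = Sum.inl (pk u1 u2 u3)) ∨
    mid pk a1 a2 a3 = Sum.inr false := by
  rcases a1 with u1 | (_|_) <;> rcases a2 with u2 | (_|_) <;>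
    rcases a3 with u3 | (_|_) <;> simp_all [mid, M]

lemma mid_spec_b (pk : V → V → V → V) (b1 b2 b3 : V ⊕ Bool)
    (s1 : b1 ≠ Sum.inr false) (s2 : b2 ≠ Sum.inr false) (s3 : b3 ≠ Sum.inr false) :
    (∃ u1 u2 u3, b1 = Sum.inl u1 ∧ b2 = Sum.inl u2 ∧ b3 = Sum.inl u3 ∧
      mid pk b1 b2 b3 = Sum.inl (pk u1 u2 u3)) ∨
    mid pk b1 b2 b3 = Sum.inr true := by
  rcases b1 with u1 | (_|_) <;> rcases b2 with u2 | (_|_) <;>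
    rcases b3 with u3 | (_|_) <;> simp_all [mid, M]

end PermAux

/-- If `G` is congruence `n`-permutable, then its two-sided extension `G^⊥⊤`
(modelled on `V ⊕ Bool` with `Sum.inr false = ⊥`, `Sum.inr true = ⊤`) is
congruence `(n+2)`-permutable. -/
theorem stmt_12 {V : Type*} (E : V → V → Prop) (n : ℕ) (hn : 1 ≤ n)
    (E₂ : V ⊕ Bool → V ⊕ Bool → Prop)
    (hE₂ : ∀ x y : V ⊕ Bool, E₂ x y ↔
      ((∃ u v, x = Sum.inl u ∧ y = Sum.inl v ∧ E u v) ∨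
       (x = Sum.inr false ∧ y ≠ Sum.inr false) ∨
       (y = Sum.inr true ∧ x ≠ Sum.inr true)))
    (h : IsNPermutable E n) :
    IsNPermutable E₂ (n + 2) := by
  classical
  obtain ⟨p, hppoly, hp0, hpc, hpl⟩ := h
  -- basic facts about E₂
  have hbot : ∀ y : V ⊕ Bool, y ≠ Sum.inr false → E₂ (Sum.inr false) y := by
    intro y hy; rw [hE₂]; exact Or.inr (Or.inl ⟨rfl, hy⟩)
  have htop : ∀ x : V ⊕ Bool, x ≠ Sum.inr true → E₂ x (Sum.inr true) := by
    intro x hx; rw [hE₂]; exact Or.inr (Or.inr ⟨rfl, hx⟩)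
  have hinl : ∀ u v, E u v → E₂ (Sum.inl u) (Sum.inl v) := by
    intro u v huv; rw [hE₂]; exact Or.inl ⟨u, v, rfl, rfl, huv⟩
  have hinl' : ∀ u v, E₂ (Sum.inl u) (Sum.inl v) → E u v := by
    intro u v huv; rw [hE₂] at huv
    rcases huv with ⟨u', v', hu, hv, huv⟩ | ⟨hu, _⟩ | ⟨hu, _⟩
    · rw [Sum.inl.injEq] at hu hv; rw [hu, hv]; exact huv
    · exact absurd hu (by simp)
    · exact absurd hu (by simp)
  have hne_top : ∀ x y : V ⊕ Bool, E₂ x y → x ≠ Sum.inr true := by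
    intro x y hxy hx; subst hx; rw [hE₂] at hxy
    rcases hxy with ⟨u', v', hu, hv, huv⟩ | ⟨hu, _⟩ | ⟨_, hu⟩
    · exact absurd hu (by simp)
    · exact absurd hu (by simp)
    · exact hu rfl
  have hne_bot : ∀ x y : V ⊕ Bool, E₂ x y → y ≠ Sum.inr false := by
    intro x y hxy hy; subst hy; rw [hE₂] at hxy
    rcases hxy with ⟨u', v', hu, hv, huv⟩ | ⟨_, hu⟩ | ⟨hu, _⟩
    · exact absurd hv (by simp)
    · exact hu rfl
    · exact absurd hu (by simp)
  -- the ℕ-indexed version of p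
  set pp : ℕ → V → V → V → V := fun k => p ⟨min k n, by omega⟩ with hpp
  have hppeq : ∀ (k : ℕ) (hk : k ≤ n) (hk' : k < n + 1), pp k = p ⟨k, hk'⟩ := by
    intro k hk hk'
    have e : (⟨min k n, by omega⟩ : Fin (n + 1)) = ⟨k, hk'⟩ := by
      simp only [Fin.mk.injEq]; omega
    exact congrArg p e
  have hpc' : ∀ (k : ℕ) (hk : k < n) (h1 : k < n + 1) (h2 : k + 1 < n + 1),
      ∀ x y, p ⟨k, h1⟩ x x y = p ⟨k + 1, h2⟩ x y y := by
    intro k hk h1 h2 x y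
    have := hpc ⟨k, hk⟩ x y
    have e1 : (⟨k, hk⟩ : Fin n).castSucc = (⟨k, h1⟩ : Fin (n + 1)) := rfl
    have e2 : (⟨k, hk⟩ : Fin n).succ = (⟨k + 1, h2⟩ : Fin (n + 1)) := rfl
    rw [e1, e2] at this
    exact this
  have hp0' : ∀ (h1 : 0 < n + 1) (x y z : V), p ⟨0, h1⟩ x y z = x := by
    intro h1 x y z
    have e : (⟨0, h1⟩ : Fin (n + 1)) = 0 := Fin.ext (Fin.val_zero _).symm
    rw [e]; exact hp0 x y z
  have hpl' : ∀ (h1 : n < n + 1) (x y z : V), p ⟨n, h1⟩ x y z = z := by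
    intro h1 x y z
    have e : (⟨n, h1⟩ : Fin (n + 1)) = Fin.last n := Fin.ext (Fin.val_last n).symm
    rw [e]; exact hpl x y z
  -- polymorphism lemmas
  have Apoly : ∀ a1 a2 a3 b1 b2 b3, E₂ a1 b1 → E₂ a2 b2 → E₂ a3 b3 →
      E₂ (PermAux.A a1 a2 a3) (PermAux.A b1 b2 b3) := by
    intro a1 a2 a3 b1 b2 b3 h1 h2 h3
    have ha := PermAux.A_spec_a a1 a2 a3 (hne_top _ _ h1) (hne_top _ _ h3)
    have hb := PermAux.A_spec_b b1 b2 b3 (hne_bot _ _ h1) (hne_bot _ _ h3)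
    rcases ha with ha | ha <;> rcases hb with hb | hb <;> rw [ha, hb]
    · exact hbot _ (by simp)
    · exact hbot _ (hne_bot _ _ h1)
    · exact htop _ (hne_top _ _ h1)
    · exact h1
  have Bpoly : ∀ a1 a2 a3 b1 b2 b3, E₂ a1 b1 → E₂ a2 b2 → E₂ a3 b3 →
      E₂ (PermAux.B a1 a2 a3) (PermAux.B b1 b2 b3) := by
    intro a1 a2 a3 b1 b2 b3 h1 h2 h3
    have ha := PermAux.B_spec_a a1 a2 a3 (hne_top _ _ h1)
    have hb := PermAux.B_spec_b b1 b2 b3 (hne_bot _ _ h1)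
    rcases ha with ha | ha <;> rcases hb with hb | hb <;> rw [ha, hb]
    · exact hbot _ (by simp)
    · exact hbot _ (hne_bot _ _ h3)
    · exact htop _ (hne_top _ _ h3)
    · exact h3
  have Mpoly : ∀ (pk : V → V → V → V),
      (∀ a1 a2 a3 b1 b2 b3, E a1 b1 → E a2 b2 → E a3 b3 →
        E (pk a1 a2 a3) (pk b1 b2 b3)) →
      ∀ a1 a2 a3 b1 b2 b3, E₂ a1 b1 → E₂ a2 b2 → E₂ a3 b3 →
      E₂ (PermAux.mid pk a1 a2 a3) (PermAux.mid pk b1 b2 b3) := by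
    intro pk hpk a1 a2 a3 b1 b2 b3 h1 h2 h3
    have ha := PermAux.mid_spec_a pk a1 a2 a3 (hne_top _ _ h1) (hne_top _ _ h2)
      (hne_top _ _ h3)
    have hb := PermAux.mid_spec_b pk b1 b2 b3 (hne_bot _ _ h1) (hne_bot _ _ h2)
      (hne_bot _ _ h3)
    rcases ha with ⟨u1, u2, u3, e1, e2, e3, ha⟩ | ha <;>
      rcases hb with ⟨v1, v2, v3, f1, f2, f3, hb⟩ | hb <;> rw [ha, hb]
    · subst e1; subst e2; subst e3; subst f1; subst f2; subst f3
      exact hinl _ _ (hpk _ _ _ _ _ _ (hinl' _ _ h1) (hinl' _ _ h2) (hinl' _ _ h3))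
    · exact htop _ (by simp)
    · exact hbot _ (by simp)
    · exact hbot _ (by simp)
  -- unfolding lemmas for Q
  have hQ0 : PermAux.Q n pp 0 = fun x _ _ => x := by
    unfold PermAux.Q; rw [if_pos rfl]
  have hQlast : PermAux.Q n pp (n + 2) = fun _ _ z => z := by
    unfold PermAux.Q; rw [if_neg (by omega), if_pos rfl]
  have hQ1 : PermAux.Q n pp 1 = PermAux.A := by
    unfold PermAux.Q; rw [if_neg (by omega), if_neg (by omega), if_pos rfl]
  have hQn1 : PermAux.Q n pp (n + 1) = PermAux.B := by
    unfold PermAux.Q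
    rw [if_neg (by omega), if_neg (by omega), if_neg (by omega), if_pos rfl]
  have hQmid : ∀ k, 2 ≤ k → k ≤ n → PermAux.Q n pp k = PermAux.mid (pp (k - 1)) := by
    intro k hk2 hkn
    unfold PermAux.Q
    rw [if_neg (by omega), if_neg (by omega), if_neg (by omega), if_neg (by omega)]
  refine ⟨fun i => PermAux.Q n pp i.val, ?_, ?_, ?_, ?_⟩
  · -- polymorphism
    intro i a1 a2 a3 b1 b2 b3 h1 h2 h3
    show E₂ (PermAux.Q n pp i.val a1 a2 a3) (PermAux.Q n pp i.val b1 b2 b3)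
    by_cases hk0 : i.val = 0
    · rw [hk0, hQ0]; exact h1
    by_cases hklast : i.val = n + 2
    · rw [hklast, hQlast]; exact h3
    by_cases hk1 : i.val = 1
    · rw [hk1, hQ1]; exact Apoly _ _ _ _ _ _ h1 h2 h3
    by_cases hkn1 : i.val = n + 1
    · rw [hkn1, hQn1]; exact Bpoly _ _ _ _ _ _ h1 h2 h3
    · have hi := i.isLt
      rw [hQmid i.val (by omega) (by omega)]
      exact Mpoly _ (fun a1 a2 a3 b1 b2 b3 => hppoly _ a1 a2 a3 b1 b2 b3)
        _ _ _ _ _ _ h1 h2 h3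
  · -- p 0 = first projection
    intro x y z
    show PermAux.Q n pp ((0 : Fin (n + 2 + 1)) : ℕ) x y z = x
    have e : ((0 : Fin (n + 2 + 1)) : ℕ) = 0 := Fin.val_zero _
    rw [e, hQ0]
  · -- the chain conditions
    intro i x y
    show PermAux.Q n pp ((i.castSucc : Fin (n + 2 + 1)) : ℕ) x x y =
      PermAux.Q n pp ((i.succ : Fin (n + 2 + 1)) : ℕ) x y y
    have hcs : ((i.castSucc : Fin (n + 2 + 1)) : ℕ) = i.val := Fin.coe_castSucc i
    have hsc : ((i.succ : Fin (n + 2 + 1)) : ℕ) = i.val + 1 := Fin.val_succ i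
    rw [hcs, hsc]
    have hi := i.isLt
    by_cases hk0 : i.val = 0
    · rw [hk0, hQ0, (by omega : (0 : ℕ) + 1 = 1), hQ1]
      exact (PermAux.A_xyy x y).symm
    by_cases hk1 : i.val = 1
    · rw [hk1, hQ1]
      by_cases hn1 : n = 1
      · rw [(by omega : (1 : ℕ) + 1 = n + 1), hQn1]
        have hsub : ∀ u v : V, u = v := by
          intro u v
          have e1 := hpc' 0 (by omega) (by omega) (by omega) u v
          rw [hp0'] at e1
          have e3 : (⟨0 + 1, by omega⟩ : Fin (n + 1)) = ⟨n, by omega⟩ :=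
            by simp only [Fin.mk.injEq]; omega
          rw [e3, hpl'] at e1
          exact e1
        exact PermAux.A_chain_B hsub x y
      · rw [hQmid 2 (by omega) (by omega)]
        refine PermAux.A_chain_mid _ ?_ x y
        intro u v
        have e1 : pp (2 - 1) = p ⟨1, by omega⟩ := hppeq 1 (by omega) (by omega)
        rw [e1, ← hpc' 0 (by omega) (by omega) (by omega) u v]
        exact hp0' _ u u v
    by_cases hkn1 : i.val = n + 1
    · rw [hkn1, hQn1, (by omega : n + 1 + 1 = n + 2), hQlast]
      exact PermAux.B_xxy x y
    by_cases hkn : i.val = n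
    · -- here n ≥ 2 since i.val ≠ 0, 1
      rw [hkn, hQmid n (by omega) (by omega), (by omega : n + 1 = n + 1), hQn1]
      refine PermAux.mid_chain_B _ ?_ x y
      intro u v
      have e1 : pp (n - 1) = p ⟨n - 1, by omega⟩ := hppeq (n - 1) (by omega) (by omega)
      rw [e1, hpc' (n - 1) (by omega) (by omega) (by omega) u v]
      rw [show (⟨n - 1 + 1, by omega⟩ : Fin (n + 1)) = ⟨n, by omega⟩ from
        by simp only [Fin.mk.injEq]; omega]
      exact hpl' _ u v v
    · -- middle: 2 ≤ i.val ≤ n - 1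
      rw [hQmid i.val (by omega) (by omega), hQmid (i.val + 1) (by omega) (by omega)]
      refine PermAux.mid_chain _ _ ?_ x y
      intro u v
      rw [hppeq (i.val - 1) (by omega) (by omega),
        hppeq (i.val + 1 - 1) (by omega) (by omega)]
      rw [hpc' (i.val - 1) (by omega) (by omega) (by omega) u v]
      congr 1
      simp only [Fin.mk.injEq]
      omega
  · -- last = third projection
    intro x y z
    show PermAux.Q n pp ((Fin.last (n + 2)) : ℕ) x y z = z
    have e : ((Fin.last (n + 2)) : ℕ) = n + 2 := Fin.val_last _
    rw [e, hQlast]
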